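/- Let n ≥ 1, N = {0,1,...,n}, let b_{ij} = b_{ji} ≥ 0 be nonnegative weights on unordered pairs of distinct elements of N with cut function β(S) = Σ_{i∈S, j∈N∖S} b_{ij}, and let ≺ be a linear order on N. Define x ∈ ℝ^N by x_i = Σ_{j : i ≺ j} b_{ij} − Σ_{j : j ≺ i} b_{ij}. Then x is an extreme point of the base polytope P(β) = {y ∈ ℝ^N : Σ_{i∈S} y_i ≤ β(S) for all S ⊆ N, and Σ_{i∈N} y_i = 0}. -/
import Mathlib


open Finset Pointwise

/-- The `i`-th standard basis vector of `ℝ^N`. -/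
noncomputable def std {m : ℕ} (i : Fin m) : Fin m → ℝ := fun k => if k = i then 1 else 0

/-- The 0/1 indicator vector of a subset `S ⊆ N`. -/
noncomputable def indic {m : ℕ} (S : Finset (Fin m)) : Fin m → ℝ := fun k => if k ∈ S then 1 else 0

/-- The standard inner product on `ℝ^N`. -/
noncomputable def ip {m : ℕ} (a b : Fin m → ℝ) : ℝ := ∑ k, a k * b k

/-- The cut set function of symmetric edge weights `b`: `β(S) = Σ_{i∈S, j∉S} b i j`. -/
noncomputable def cutFun {m : ℕ} (b : Fin m → Fin m → ℝ) (S : Finset (Fin m)) : ℝ :=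
  ∑ i ∈ S, ∑ j ∈ Sᶜ, b i j

/-- The base polytope of a set function `β`. -/
def basePoly {m : ℕ} (β : Finset (Fin m) → ℝ) : Set (Fin m → ℝ) :=
  {x | (∀ S : Finset (Fin m), ∑ i ∈ S, x i ≤ β S) ∧ ∑ i, x i = 0}

/-- For a linear order `≺` on `N`, the point
`x_i = Σ_{j : i ≺ j} b_{ij} − Σ_{j : j ≺ i} b_{ij}` is an extreme point of the base
polytope of the cut function. -/
theorem greedy_vertex (n : ℕ) (hn : 1 ≤ n) (b : Fin (n + 1) → Fin (n + 1) → ℝ)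
    (hsym : ∀ i j, b i j = b j i) (hnn : ∀ i j, 0 ≤ b i j)
    (r : Fin (n + 1) → Fin (n + 1) → Prop) [DecidableRel r]
    (hr : IsStrictTotalOrder (Fin (n + 1)) r)
    (x : Fin (n + 1) → ℝ)
    (hx : ∀ i, x i = (∑ j ∈ Finset.univ.filter (fun j => r i j), b i j)
                   - (∑ j ∈ Finset.univ.filter (fun j => r j i), b i j)) :
    x ∈ (basePoly (cutFun b)).extremePoints ℝ := by
  haveI := hr
  set c : Fin (n+1) → Fin (n+1) → ℝ :=
    fun i j => if r i j then b i j else if r j i then -(b i j) else 0 with hc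
  have hasym : ∀ i j, r i j → ¬ r j i := fun i j h h' =>
    (irrefl_of r i) (trans_of r h h')
  have hx' : ∀ i, x i = ∑ j, c i j := by
    intro i
    rw [hx i, Finset.sum_filter, Finset.sum_filter, ← Finset.sum_sub_distrib]
    apply Finset.sum_congr rfl
    intro j _
    by_cases h1 : r i j
    · simp [hc, h1, hasym i j h1]
    · by_cases h2 : r j i <;> simp [hc, h1, h2]
  have hanti : ∀ i j, c j i = - c i j := by
    intro i j
    by_cases h1 : r i j
    · simp [hc, h1, hasym i j h1, hsym i j]
    · by_cases h2 : r j i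
      · simp [hc, h1, h2, hsym i j]
      · simp [hc, h1, h2]
  have hsumS : ∀ S : Finset (Fin (n+1)), ∑ i ∈ S, x i = ∑ i ∈ S, ∑ j ∈ Sᶜ, c i j := by
    intro S
    have h1 : ∑ i ∈ S, ∑ j ∈ S, c i j = ∑ i ∈ S, ∑ j ∈ S, c j i := Finset.sum_comm
    have h2 : ∑ i ∈ S, ∑ j ∈ S, c j i = - ∑ i ∈ S, ∑ j ∈ S, c i j := by
      rw [← Finset.sum_neg_distrib]
      exact Finset.sum_congr rfl fun i _ => by
        rw [← Finset.sum_neg_distrib]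
        exact Finset.sum_congr rfl fun j _ => hanti i j
    have h0 : ∑ i ∈ S, ∑ j ∈ S, c i j = 0 := by linarith
    calc ∑ i ∈ S, x i = ∑ i ∈ S, (∑ j ∈ S, c i j + ∑ j ∈ Sᶜ, c i j) := by
          refine Finset.sum_congr rfl fun i _ => ?_
          rw [hx' i, Finset.sum_add_sum_compl]
      _ = _ := by rw [Finset.sum_add_distrib, h0, zero_add]
  have hineq : ∀ S, ∑ i ∈ S, x i ≤ cutFun b S := by
    intro S
    rw [hsumS S, cutFun]
    refine Finset.sum_le_sum fun i _ => Finset.sum_le_sum fun j _ => ?_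
    by_cases h1 : r i j
    · simp [hc, h1]
    · by_cases h2 : r j i
      · simp only [hc, if_neg h1, if_pos h2]
        linarith [hnn i j]
      · simp only [hc, if_neg h1, if_neg h2]
        exact hnn i j
  have hzero : ∑ i, x i = 0 := by
    have := hsumS Finset.univ
    simpa using this
  have htight : ∀ S : Finset (Fin (n+1)), (∀ i ∈ S, ∀ j, j ∉ S → r i j) →
      ∑ i ∈ S, x i = cutFun b S := by
    intro S hS
    rw [hsumS S, cutFun]
    refine Finset.sum_congr rfl fun i hi => Finset.sum_congr rfl fun j hj => ?_
    have hj' : j ∉ S := Finset.mem_compl.mp hj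
    simp [hc, hS i hi j hj']
  have hxmem : x ∈ basePoly (cutFun b) := ⟨hineq, hzero⟩
  rw [mem_extremePoints]
  refine ⟨hxmem, ?_⟩
  intro y hy z hz hseg
  obtain ⟨a, t, ha, ht, hat, heq⟩ := hseg
  have hpt : ∀ i, x i = a * y i + t * z i := by
    intro i; rw [← heq]; simp
  have hsum : ∀ S : Finset (Fin (n+1)),
      ∑ i ∈ S, x i = a * ∑ i ∈ S, y i + t * ∑ i ∈ S, z i := by
    intro S
    simp only [Finset.mul_sum, ← Finset.sum_add_distrib]
    exact Finset.sum_congr rfl fun i _ => hpt i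
  have hforce : ∀ S : Finset (Fin (n+1)), (∀ i ∈ S, ∀ j, j ∉ S → r i j) →
      ∑ i ∈ S, y i = cutFun b S ∧ ∑ i ∈ S, z i = cutFun b S := by
    intro S hS
    have h1 := hy.1 S
    have h2 := hz.1 S
    have h3 := htight S hS
    rw [hsum S] at h3
    have hy' : a * ∑ i ∈ S, y i ≤ a * cutFun b S := mul_le_mul_of_nonneg_left h1 ha.le
    have hz' : t * ∑ i ∈ S, z i ≤ t * cutFun b S := mul_le_mul_of_nonneg_left h2 ht.le
    have hc1 : a * cutFun b S + t * cutFun b S = cutFun b S := by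
      rw [← add_mul, hat, one_mul]
    constructor
    · have : a * ∑ i ∈ S, y i = a * cutFun b S := by linarith
      exact mul_left_cancel₀ (ne_of_gt ha) this
    · have : t * ∑ i ∈ S, z i = t * cutFun b S := by linarith
      exact mul_left_cancel₀ (ne_of_gt ht) this
  have key : ∀ (w : Fin (n+1) → ℝ),
      (∀ S : Finset (Fin (n+1)), (∀ i ∈ S, ∀ j, j ∉ S → r i j) → ∑ i ∈ S, w i = cutFun b S) →
      w = x := by
    intro w hw
    funext k
    set S1 := Finset.univ.filter (fun i => r i k) with hS1
    have hk : k ∉ S1 := by simp [hS1, irrefl_of r k]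
    have hdown1 : ∀ i ∈ S1, ∀ j, j ∉ S1 → r i j := by
      intro i hi j hj
      simp only [hS1, Finset.mem_filter, Finset.mem_univ, true_and] at hi hj
      rcases trichotomous_of r j k with h | h | h
      · exact absurd h hj
      · exact h ▸ hi
      · exact trans_of r hi h
    have hdown2 : ∀ i ∈ insert k S1, ∀ j, j ∉ insert k S1 → r i j := by
      intro i hi j hj
      simp only [hS1, Finset.mem_insert, Finset.mem_filter, Finset.mem_univ, true_and,
        not_or] at hi hj
      have hjk : r k j := by
        rcases trichotomous_of r j k with h | h | h
        · exact absurd h hj.2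
        · exact absurd h hj.1
        · exact h
      rcases hi with h | h
      · exact h ▸ hjk
      · exact trans_of r h hjk
    have e1 := hw S1 hdown1
    have e2 := hw (insert k S1) hdown2
    have f1 := htight S1 hdown1
    have f2 := htight (insert k S1) hdown2
    rw [Finset.sum_insert hk] at e2 f2
    linarith
  exact ⟨key y fun S hS => (hforce S hS).1, key z fun S hS => (hforce S hS).2⟩
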